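/- Let d ≥ 1 be an integer, m1, m2 > 0, and let ε, α, δ, γ ∈ ℝ satisfy 0 < ε ≤ 1, ε·m1/m2 ≤ 1, ε/(1+ε) ≤ α ≤ 1, ε/(1+ε) ≤ δ ≤ 1, and (1−δ)²·m1/d ≤ γ ≤ (1−δ)·(m1/d)·ε/(1+ε). Let T1, T2 > 0 and u1, u2 ∈ ℝ^d. Define γ1 = (1−δ)²·m1/d, γ2 = (1−δ)²·ε²·m1²/(d·m2), γ̃ = (m1/d)·ε·(1−δ) − ε·γ, T̄12 = α T1 + (1−α) T2, and T̄21 = ε(1−α) T1 + (1 − ε(1−α)) T2. Then ε T1 γ̃ |u1−u2|² + ε γ1 |u1−u2|² T̄21 + T̄12 γ2 |u1−u2|² + γ |u1−u2|² T2 ≤ (1+ε) T̄12 γ̃ |u1−u2|² + (1+ε) γ |u1−u2|² T̄21. -/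

import Mathlib

open Real

set_option maxHeartbeats 1000000 in

/-- The mixed temperature–drift inequality used in the proof of the H-theorem. -/
theorem mixed_coefficient_inequality
    (d : ℕ) (hd : 1 ≤ d) (m1 m2 : ℝ) (hm1 : 0 < m1) (hm2 : 0 < m2)
    (ε α δ γ : ℝ) (hε0 : 0 < ε) (hε1 : ε ≤ 1) (hεm : ε * m1 / m2 ≤ 1)
    (hα0 : ε / (1 + ε) ≤ α) (hα1 : α ≤ 1)
    (hδ0 : ε / (1 + ε) ≤ δ) (hδ1 : δ ≤ 1)
    (hγ0 : (1 - δ) ^ 2 * m1 / (d : ℝ) ≤ γ)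
    (hγ1 : γ ≤ (1 - δ) * (m1 / (d : ℝ)) * (ε / (1 + ε)))
    (T1 T2 : ℝ) (hT1 : 0 < T1) (hT2 : 0 < T2)
    (u1 u2 : EuclideanSpace ℝ (Fin d))
    (γ1 γ2 γt Tb12 Tb21 : ℝ)
    (hγ1def : γ1 = (1 - δ) ^ 2 * m1 / (d : ℝ))
    (hγ2def : γ2 = (1 - δ) ^ 2 * ε ^ 2 * m1 ^ 2 / ((d : ℝ) * m2))
    (hγtdef : γt = (m1 / (d : ℝ)) * ε * (1 - δ) - ε * γ)
    (hTb12 : Tb12 = α * T1 + (1 - α) * T2)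
    (hTb21 : Tb21 = ε * (1 - α) * T1 + (1 - ε * (1 - α)) * T2) :
    ε * T1 * γt * ‖u1 - u2‖ ^ 2 + ε * γ1 * ‖u1 - u2‖ ^ 2 * Tb21
      + Tb12 * γ2 * ‖u1 - u2‖ ^ 2 + γ * ‖u1 - u2‖ ^ 2 * T2
    ≤ (1 + ε) * Tb12 * γt * ‖u1 - u2‖ ^ 2
      + (1 + ε) * γ * ‖u1 - u2‖ ^ 2 * Tb21 := by
  subst hγ1def hγ2def hγtdef hTb12 hTb21
  have hs0 : 0 ≤ ‖u1 - u2‖ ^ 2 := by positivity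
  generalize ‖u1 - u2‖ ^ 2 = s at hs0 ⊢
  have hdpos : (0:ℝ) < (d:ℝ) := by exact_mod_cast Nat.lt_of_lt_of_le Nat.zero_lt_one hd
  have hdne : (d:ℝ) ≠ 0 := ne_of_gt hdpos
  have hb : 0 < m1 / (d:ℝ) := by positivity
  have hεp : (0:ℝ) < 1 + ε := by linarith
  rw [div_le_iff₀ hεp] at hα0 hδ0
  have e1 : (1 - δ) * (m1 / (d:ℝ)) * (ε / (1 + ε)) = ((1 - δ) * (m1 / (d:ℝ)) * ε) / (1 + ε) := by
    ring
  rw [e1, le_div_iff₀ hεp] at hγ1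
  -- hγ1 : γ * (1 + ε) ≤ (1 - δ) * (m1 / d) * ε
  have ht0 : (0:ℝ) ≤ 1 - δ := by linarith
  have hα' : 0 ≤ α := by nlinarith
  have hγl : (1 - δ) ^ 2 * (m1 / (d:ℝ)) ≤ γ := by
    have : (1 - δ) ^ 2 * m1 / (d:ℝ) = (1 - δ) ^ 2 * (m1 / (d:ℝ)) := by ring
    linarith [hγ0, this ▸ hγ0]
  have hγnn : 0 ≤ γ := le_trans (by positivity) hγl
  -- 2 * (1 - δ) ≤ 1
  have h2t : 2 * (1 - δ) ≤ 1 := by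
    rcases ht0.eq_or_lt with h | h
    · linarith
    · have hsq : (m1 / (d:ℝ)) * ((1 - δ) ^ 2 * (1 + ε)) ≤ (m1 / (d:ℝ)) * ((1 - δ) * ε) := by
        nlinarith
      have hsq' : (1 - δ) ^ 2 * (1 + ε) ≤ (1 - δ) * ε := (mul_le_mul_iff_of_pos_left hb).mp hsq
      have hsq2 : (1 - δ) * ((1 - δ) * (1 + ε)) ≤ (1 - δ) * ε := by nlinarith
      have h3 : (1 - δ) * (1 + ε) ≤ ε := (mul_le_mul_iff_of_pos_left h).mp (by linarith [hsq2])
      nlinarith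
  -- positivity of mixture temperatures
  have hTb12nn : 0 ≤ α * T1 + (1 - α) * T2 := by
    nlinarith [mul_nonneg hα' hT1.le, mul_nonneg (sub_nonneg.2 hα1) hT2.le]
  have hTb21nn : 0 ≤ ε * (1 - α) * T1 + (1 - ε * (1 - α)) * T2 := by
    have h1 : 0 ≤ ε * (1 - α) := mul_nonneg hε0.le (sub_nonneg.2 hα1)
    have h2 : ε * (1 - α) ≤ 1 := by nlinarith
    nlinarith [mul_nonneg h1 hT1.le, mul_nonneg (sub_nonneg.2 h2) hT2.le]
  -- slack 1 : γ2 ≤ ε * γ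
  have hq0 : 0 ≤ ε * m1 / m2 := by positivity
  have heq2 : (1 - δ) ^ 2 * ε ^ 2 * m1 ^ 2 / ((d:ℝ) * m2)
      = ((1 - δ) ^ 2 * (m1 / (d:ℝ))) * ε * (ε * m1 / m2) := by
    field_simp
  have hγ2le : (1 - δ) ^ 2 * ε ^ 2 * m1 ^ 2 / ((d:ℝ) * m2) ≤ ε * γ := by
    rw [heq2]
    have A0 : 0 ≤ (1 - δ) ^ 2 * (m1 / (d:ℝ)) := by positivity
    nlinarith [mul_nonneg (mul_nonneg hε0.le A0) (sub_nonneg.2 hεm),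
      mul_nonneg hε0.le (sub_nonneg.2 hγl)]
  have hS1 : 0 ≤ (α * T1 + (1 - α) * T2) * (ε * γ - (1 - δ) ^ 2 * ε ^ 2 * m1 ^ 2 / ((d:ℝ) * m2)) :=
    mul_nonneg hTb12nn (sub_nonneg.2 hγ2le)
  have hS2 : 0 ≤ ε * ((ε * (1 - α) * T1 + (1 - ε * (1 - α)) * T2) * (γ - (1 - δ) ^ 2 * m1 / (d:ℝ))) := by
    have : (1 - δ) ^ 2 * m1 / (d:ℝ) = (1 - δ) ^ 2 * (m1 / (d:ℝ)) := by ring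
    exact mul_nonneg hε0.le (mul_nonneg hTb21nn (by rw [this]; exact sub_nonneg.2 hγl))
  -- P1 ≥ 0
  have hP1 : 0 ≤ (1 - δ) * (m1 / (d:ℝ)) * ((1 + ε) * α - ε) + γ * ((1 + ε) - (3 + ε) * α) := by
    rcases le_or_gt 0 ((1 + ε) - (3 + ε) * α) with hc | hc
    · nlinarith [mul_nonneg (sub_nonneg.2 hγl) hc,
        mul_nonneg (mul_nonneg (mul_nonneg hb.le ht0)
          (mul_nonneg (sub_nonneg.2 hα1) ht0)) (sub_nonneg.2 hε1),
        mul_nonneg (mul_nonneg (mul_nonneg hb.le ht0)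
          (by linarith : (0:ℝ) ≤ α * (1 + ε) - ε)) (by linarith : (0:ℝ) ≤ 1 - 2 * (1 - δ))]
    · nlinarith [mul_nonneg (sub_nonneg.2 hγ1) (by linarith : (0:ℝ) ≤ (3 + ε) * α - (1 + ε)),
        mul_nonneg (mul_nonneg (mul_nonneg hb.le ht0) hα') (sub_nonneg.2 hε1), hεp]
  -- P2 ≥ 0
  have hP2 : 0 ≤ (1 - α) * ((1 + ε) * ((1 - δ) * (m1 / (d:ℝ))) - (3 + ε) * γ) := by
    have hinner : 0 ≤ (1 + ε) * ((1 - δ) * (m1 / (d:ℝ))) - (3 + ε) * γ := by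
      nlinarith [mul_nonneg (sub_nonneg.2 hγ1) (by linarith : (0:ℝ) ≤ 3 + ε),
        mul_nonneg (mul_nonneg hb.le ht0) (sub_nonneg.2 hε1), hεp]
    exact mul_nonneg (sub_nonneg.2 hα1) hinner
  -- assemble
  nlinarith [mul_nonneg (mul_nonneg (mul_nonneg hε0.le hP1) hT1.le) hs0,
    mul_nonneg (mul_nonneg (mul_nonneg hε0.le hP2) hT2.le) hs0,
    mul_nonneg hS1 hs0, mul_nonneg hS2 hs0]
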